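/- For every integer n ≥ 2 and every real number a > 0, the identity ∑_{k=0}^{n−2} C(n−2, k)·(1/a)^{k+1}·(1−1/a)^{n−2−k}·(1/(k+2)) = a/n − (a−1)/(n−1) + ((a−1)/(n−1) − (a−1)/n)·(1−1/a)^{n−1} holds. -/

import Mathlib

open Finset

private lemma S0 (N : ℕ) (x : ℝ) :
    ∑ j ∈ range (N + 1), (N.choose j : ℝ) * x ^ j * (1 - x) ^ (N - j) = 1 := by
  have h := add_pow x (1 - x) N
  simp only [add_sub_cancel, one_pow] at h
  conv_rhs => rw [h]
  exact Finset.sum_congr rfl fun k hk => by ring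

private lemma S1 (N : ℕ) (x : ℝ) :
    ∑ j ∈ range (N + 1), (j : ℝ) * (N.choose j : ℝ) * x ^ j * (1 - x) ^ (N - j)
      = N * x * (x + (1 - x)) ^ (N - 1) := by
  cases N with
  | zero => simp
  | succ M =>
    rw [Finset.sum_range_succ']
    simp only [Nat.cast_zero, zero_mul]
    have key : ∀ i : ℕ, ((i : ℝ) + 1) * ((M + 1).choose (i + 1) : ℝ) = (M + 1) * (M.choose i : ℝ) := by
      intro i
      have h2 : ((M + 1) * M.choose i : ℕ) = ((M + 1).choose (i + 1) * (i + 1) : ℕ) :=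
        Nat.add_one_mul_choose_eq M i
      have h3 := congrArg (fun t : ℕ => (t : ℝ)) h2
      push_cast at h3
      linarith
    have : ∀ i ∈ range (M + 1),
        ((i : ℝ) + 1) * ((M + 1).choose (i + 1) : ℝ) * x ^ (i + 1) * (1 - x) ^ (M - i)
          = (((M : ℝ) + 1) * x) * ((M.choose i : ℝ) * x ^ i * (1 - x) ^ (M - i)) := by
      intro i hi
      linear_combination (x ^ (i + 1) * (1 - x) ^ (M - i)) * key i
    push_cast
    rw [Finset.sum_congr rfl this, ← Finset.mul_sum, S0]
    simp

private lemma key_choose (m k : ℕ) :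
    ((m : ℝ) + 1) * ((m : ℝ) + 2) * (m.choose k : ℝ)
      = ((k : ℝ) + 1) * ((k : ℝ) + 2) * ((m + 2).choose (k + 2) : ℝ) := by
  have h1 : ((m + 1) * m.choose k : ℕ) = ((m + 1).choose (k + 1) * (k + 1) : ℕ) :=
    Nat.add_one_mul_choose_eq m k
  have h2 : ((m + 2) * (m + 1).choose (k + 1) : ℕ) = ((m + 2).choose (k + 2) * (k + 2) : ℕ) :=
    Nat.add_one_mul_choose_eq (m + 1) (k + 1)
  have h1' := congrArg (fun t : ℕ => (t : ℝ)) h1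
  have h2' := congrArg (fun t : ℕ => (t : ℝ)) h2
  push_cast at h1' h2'
  linear_combination ((m : ℝ) + 2) * h1' + ((k : ℝ) + 1) * h2'

private lemma key_sum (m : ℕ) (x : ℝ) (hx : x ≠ 0) :
    ∑ k ∈ range (m + 1),
        (m.choose k : ℝ) * x ^ (k + 1) * (1 - x) ^ (m - k) * (1 / ((k : ℝ) + 2))
      = (((m : ℝ) + 2) * x - 1 + (1 - x) ^ (m + 2)) / (x * ((m : ℝ) + 1) * ((m : ℝ) + 2)) := by
  have hU : ∑ k ∈ range (m + 1),
      ((k : ℝ) + 1) * (((m + 2).choose (k + 2) : ℝ)) * x ^ (k + 2) * (1 - x) ^ (m - k)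
      = ((m : ℝ) + 2) * x - 1 + (1 - x) ^ (m + 2) := by
    have hV : ∑ j ∈ range (m + 2 + 1),
        ((j : ℝ) - 1) * (((m + 2).choose j : ℝ)) * x ^ j * (1 - x) ^ (m + 2 - j)
        = ((m : ℝ) + 2) * x - 1 := by
      have hs : ∑ j ∈ range (m + 2 + 1),
          ((j : ℝ) - 1) * (((m + 2).choose j : ℝ)) * x ^ j * (1 - x) ^ (m + 2 - j)
          = (∑ j ∈ range (m + 2 + 1),
              (j : ℝ) * (((m + 2).choose j : ℝ)) * x ^ j * (1 - x) ^ (m + 2 - j))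
            - ∑ j ∈ range (m + 2 + 1),
              (((m + 2).choose j : ℝ)) * x ^ j * (1 - x) ^ (m + 2 - j) := by
        rw [← Finset.sum_sub_distrib]
        exact Finset.sum_congr rfl fun j hj => by ring
      rw [hs, S0, S1]
      push_cast
      simp
    rw [Finset.sum_range_succ', Finset.sum_range_succ'] at hV
    push_cast at hV
    have hcong2 : ∀ j ∈ range (m + 1),
        ((j : ℝ) + 1 + 1 - 1) * (((m + 2).choose (j + 1 + 1) : ℝ)) * x ^ (j + 1 + 1) *
            (1 - x) ^ (m - j)
        = ((j : ℝ) + 1) * (((m + 2).choose (j + 2) : ℝ)) * x ^ (j + 2) * (1 - x) ^ (m - j) := by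
      intro j hj
      norm_num
    rw [Finset.sum_congr rfl hcong2] at hV
    norm_num at hV
    linarith [hV]
  have hterm : ∀ k ∈ range (m + 1),
      (m.choose k : ℝ) * x ^ (k + 1) * (1 - x) ^ (m - k) * (1 / ((k : ℝ) + 2))
      = (((k : ℝ) + 1) * (((m + 2).choose (k + 2) : ℝ)) * x ^ (k + 2) * (1 - x) ^ (m - k))
          / (x * ((m : ℝ) + 1) * ((m : ℝ) + 2)) := by
    intro k hk
    have hk2 : ((k : ℝ) + 2) ≠ 0 := by positivity
    have hm1 : ((m : ℝ) + 1) ≠ 0 := by positivity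
    have hm2 : ((m : ℝ) + 2) ≠ 0 := by positivity
    have h := key_choose m k
    field_simp
    linear_combination (x ^ (k + 2) * (1 - x) ^ (m - k)) * h
  rw [Finset.sum_congr rfl hterm, ← Finset.sum_div, hU]

theorem stmt_15 (n : ℕ) (hn : 2 ≤ n) (a : ℝ) (ha : 0 < a) :
    ∑ k ∈ Finset.range (n - 1),
        ((n - 2).choose k : ℝ) * (1 / a) ^ (k + 1) * (1 - 1 / a) ^ (n - 2 - k) *
          (1 / ((k : ℝ) + 2)) =
      a / n - (a - 1) / ((n : ℝ) - 1) +
        ((a - 1) / ((n : ℝ) - 1) - (a - 1) / n) * (1 - 1 / a) ^ (n - 1) := by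
  obtain ⟨m, rfl⟩ : ∃ m, n = m + 2 := ⟨n - 2, by omega⟩
  have ha' : a ≠ 0 := ne_of_gt ha
  have hx : (1 / a : ℝ) ≠ 0 := one_div_ne_zero ha'
  have h1 : m + 2 - 1 = m + 1 := by omega
  have h2 : m + 2 - 2 = m := by omega
  have h3 : ∀ k, m + 2 - 2 - k = m - k := fun k => by omega
  simp only [h1, h2, h3]
  rw [key_sum m (1 / a) hx]
  have hm1 : ((m : ℝ) + 1) ≠ 0 := by positivity
  have hm2 : ((m : ℝ) + 2) ≠ 0 := by positivity
  have hm1' : (1 + (m : ℝ)) ≠ 0 := by positivity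
  have hm2' : (2 + (m : ℝ)) ≠ 0 := by positivity
  push_cast
  rw [pow_succ (1 - 1 / a) (m + 1)]
  generalize (1 - 1 / a) ^ (m + 1) = y
  rw [show (m : ℝ) + 2 - 1 = (m : ℝ) + 1 from by ring]
  field_simp
  ring
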